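/- Compact embedding of the Hilbert brick into the space of analytic Hamiltonians. Let n ≥ 1 and let 0 < s < 1 satisfy √n·s² < 1. For every h = (h_k)_{k≥1} in the Hilbert brick HB^ℕ, the series Σ_{k≥1} h_k(I(z)) converges uniformly on the closed ball D_s of radius s in ℂ^{2n} and defines a function ι(h) ∈ A_s with ‖ι(h)‖_s ≤ (√n·s²)/(1 − √n·s²). The map ι : HB^ℕ → (A_s, ‖·‖_s) is continuous when HB^ℕ carries the product topology; consequently ι(HB^ℕ) is a compact subset of A_s, and the pushforward ι_*μ of the product probability measure μ is a compactly supported Borel probability measure on the Banach space A_s. -/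

import Mathlib

open Metric Set Filter MeasureTheory

noncomputable section

/-- Real phase space `ℝⁿ × ℝⁿ`. -/
abbrev RPhase (n : ℕ) := (Fin n → ℝ) × (Fin n → ℝ)

/-- Complex phase space `ℂⁿ × ℂⁿ`. -/
abbrev CPhase (n : ℕ) := (Fin n → ℂ) × (Fin n → ℂ)

/-- Embedding of the real phase space in the complex one. -/
def embedR {n : ℕ} (z : RPhase n) : CPhase n :=
  (fun j => (z.1 j : ℂ), fun j => (z.2 j : ℂ))

/-- The formal actions, extended to the complex phase space. -/
def cactions {n : ℕ} (z : CPhase n) : Fin n → ℂ := fun j => ((z.1 j) ^ 2 + (z.2 j) ^ 2) / 2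

/-- `F` is real-valued at the real points of the set `S`. -/
def RealOnRealOn {n : ℕ} (F : CPhase n → ℂ) (S : Set (CPhase n)) : Prop :=
  ∀ w : RPhase n, embedR w ∈ S → (F (embedR w)).im = 0

/-- The space of homogeneous polynomials of degree `k` in `n` variables, encoded by their
coefficients indexed by monomials, i.e. by multisets of `k` variables. -/
abbrev HomPoly (n k : ℕ) := Sym (Fin n) k → ℝ

/-- The multinomial coefficient `C_k^l = k!/(l₁!⋯lₙ!)` of a monomial of degree `k`. -/
def multinomCoeff {n k : ℕ} (m : Sym (Fin n) k) : ℕ :=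
  Nat.multinomial Finset.univ fun i => Multiset.count i (m : Multiset (Fin n))

/-- Square of the Bombieri norm `‖P‖_k = (Σ_{|l|=k} |p_l|²/C_k^l)^{1/2}`. -/
def bombieriNormSq {n k : ℕ} (p : HomPoly n k) : ℝ :=
  ∑ m : Sym (Fin n) k, (p m) ^ 2 / (multinomCoeff m : ℝ)

/-- Evaluation of a homogeneous polynomial at a complex point. -/
def evalHomC {n k : ℕ} (p : HomPoly n k) (I : Fin n → ℂ) : ℂ :=
  ∑ m : Sym (Fin n) k, (p m : ℂ) * ∏ i, I i ^ Multiset.count i (m : Multiset (Fin n))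

/-- The unit ball of the Bombieri norm on `HomPoly n k`. -/
def bombieriUnitBall (n k : ℕ) : Set (HomPoly n k) := {p | bombieriNormSq p ≤ 1}

/-- `μ_k`: the uniform (normalized Lebesgue) probability measure on the unit Bombieri
ball of the space of homogeneous polynomials of degree `k` in `n` variables. -/
def muk (n k : ℕ) : Measure (HomPoly n k) :=
  (volume (bombieriUnitBall n k))⁻¹ • volume.restrict (bombieriUnitBall n k)

-- ### basic multinomial lemmas

lemma multinomCoeff_pos {n k : ℕ} (m : Sym (Fin n) k) : 0 < multinomCoeff m :=
  Nat.multinomial_pos _ _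

lemma sum_count_eq {n k : ℕ} (m : Sym (Fin n) k) :
    ∑ i : Fin n, Multiset.count i (m : Multiset (Fin n)) = k := by
  have h1 : ∑ i ∈ (m : Multiset (Fin n)).toFinset, Multiset.count i (m : Multiset (Fin n))
      = Multiset.card (m : Multiset (Fin n)) := Multiset.toFinset_sum_count_eq _
  have h2 : ∑ i ∈ (m : Multiset (Fin n)).toFinset, Multiset.count i (m : Multiset (Fin n))
      = ∑ i : Fin n, Multiset.count i (m : Multiset (Fin n)) :=
    Finset.sum_subset (Finset.subset_univ _) (fun i _ hi => by
      simpa [Multiset.count_eq_zero] using fun h => hi (Multiset.mem_toFinset.2 h))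
  rw [← h2, h1]; exact m.2

lemma multinomCoeff_eq {n k : ℕ} (m : Sym (Fin n) k) :
    multinomCoeff m = Multiset.countPerms (m : Multiset (Fin n)) := by
  unfold multinomCoeff
  rw [Multiset.countPerms, Finsupp.multinomial_eq_of_support_subset (Finset.subset_univ _)]
  congr 1

lemma sum_multinomCoeff {n k : ℕ} :
    ∑ m : Sym (Fin n) k, (multinomCoeff m : ℝ) = (n : ℝ) ^ k := by
  classical
  have h := Finset.sum_pow (s := (Finset.univ : Finset (Fin n))) (fun _ => (1 : ℝ)) k
  simp only [Finset.sum_const, Finset.card_univ, Fintype.card_fin, nsmul_eq_mul, mul_one,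
    Finset.sym_univ] at h
  rw [h]
  refine Finset.sum_congr rfl fun m _ => ?_
  rw [multinomCoeff_eq]
  simp

lemma bombieriNormSq_nonneg {n k : ℕ} (p : HomPoly n k) : 0 ≤ bombieriNormSq p :=
  Finset.sum_nonneg fun m _ => div_nonneg (sq_nonneg _) (Nat.cast_nonneg _)

-- Cauchy-Schwarz with Bombieri weights
lemma sum_abs_mul_le {n k : ℕ} (p : HomPoly n k) (a : Sym (Fin n) k → ℝ) (ha : ∀ m, 0 ≤ a m) :
    ∑ m : Sym (Fin n) k, |p m| * a m ≤
      Real.sqrt (bombieriNormSq p) *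
        Real.sqrt (∑ m : Sym (Fin n) k, (multinomCoeff m : ℝ) * a m ^ 2) := by
  classical
  have hC : ∀ m : Sym (Fin n) k, (0 : ℝ) < (multinomCoeff m : ℝ) := by
    intro m; exact_mod_cast multinomCoeff_pos m
  have key : (∑ m : Sym (Fin n) k, |p m| * a m) ^ 2 ≤
      bombieriNormSq p * ∑ m : Sym (Fin n) k, (multinomCoeff m : ℝ) * a m ^ 2 := by
    have h := Finset.sum_mul_sq_le_sq_mul_sq Finset.univ
      (fun m : Sym (Fin n) k => |p m| / Real.sqrt (multinomCoeff m))
      (fun m : Sym (Fin n) k => Real.sqrt (multinomCoeff m) * a m)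
    have e1 : ∀ m : Sym (Fin n) k,
        |p m| / Real.sqrt (multinomCoeff m) * (Real.sqrt (multinomCoeff m) * a m)
          = |p m| * a m := by
      intro m
      have hne : Real.sqrt (multinomCoeff m) ≠ 0 :=
        ne_of_gt (Real.sqrt_pos.2 (hC m))
      field_simp
    have e2 : ∀ m : Sym (Fin n) k,
        (|p m| / Real.sqrt (multinomCoeff m)) ^ 2 = p m ^ 2 / (multinomCoeff m : ℝ) := by
      intro m
      rw [div_pow, sq_abs, Real.sq_sqrt (hC m).le]
    have e3 : ∀ m : Sym (Fin n) k,
        (Real.sqrt (multinomCoeff m) * a m) ^ 2 = (multinomCoeff m : ℝ) * a m ^ 2 := by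
      intro m
      rw [mul_pow, Real.sq_sqrt (hC m).le]
    simp only [e1, e2, e3] at h
    exact h
  have h0 : 0 ≤ ∑ m : Sym (Fin n) k, |p m| * a m :=
    Finset.sum_nonneg fun m _ => mul_nonneg (abs_nonneg _) (ha m)
  have := Real.sqrt_le_sqrt key
  rwa [Real.sqrt_sq h0, Real.sqrt_mul (bombieriNormSq_nonneg p)] at this

lemma evalHomC_norm_le {n k : ℕ} (p : HomPoly n k) (I : Fin n → ℂ) (t : ℝ) (ht : 0 ≤ t)
    (hI : ∀ i, ‖I i‖ ≤ t) :
    ‖evalHomC p I‖ ≤ Real.sqrt (bombieriNormSq p) * (Real.sqrt n * t) ^ k := by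
  classical
  have step1 : ‖evalHomC p I‖ ≤ ∑ m : Sym (Fin n) k, |p m| * t ^ k := by
    refine (norm_sum_le _ _).trans (Finset.sum_le_sum fun m _ => ?_)
    rw [norm_mul, Complex.norm_real, Real.norm_eq_abs]
    refine mul_le_mul_of_nonneg_left ?_ (abs_nonneg _)
    calc ‖∏ i, I i ^ Multiset.count i (m : Multiset (Fin n))‖
        = ∏ i, ‖I i‖ ^ Multiset.count i (m : Multiset (Fin n)) := by
          rw [norm_prod]; exact Finset.prod_congr rfl fun i _ => norm_pow _ _
      _ ≤ ∏ i, t ^ Multiset.count i (m : Multiset (Fin n)) :=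
          Finset.prod_le_prod (fun i _ => by positivity)
            (fun i _ => pow_le_pow_left₀ (norm_nonneg _) (hI i) _)
      _ = t ^ k := by rw [Finset.prod_pow_eq_pow_sum, sum_count_eq]
  have step2 := sum_abs_mul_le p (fun _ => t ^ k) (fun _ => by positivity)
  have e : Real.sqrt (∑ m : Sym (Fin n) k, (multinomCoeff m : ℝ) * (t ^ k) ^ 2)
      = (Real.sqrt n * t) ^ k := by
    rw [← Finset.sum_mul, sum_multinomCoeff]
    have h2 : Real.sqrt n ^ 2 = (n : ℝ) := Real.sq_sqrt (by positivity)
    have h3 : ((Real.sqrt n * t) ^ k) ^ 2 = (Real.sqrt n ^ 2) ^ k * (t ^ k) ^ 2 := by ring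
    have : (n : ℝ) ^ k * (t ^ k) ^ 2 = ((Real.sqrt n * t) ^ k) ^ 2 := by rw [h3, h2]
    rw [this, Real.sqrt_sq (by positivity)]
  calc ‖evalHomC p I‖ ≤ ∑ m : Sym (Fin n) k, |p m| * t ^ k := step1
    _ ≤ _ := by rw [← e]; exact step2

-- ### bounds on the actions

lemma norm_cactions_le {n : ℕ} (z : CPhase n) {t : ℝ} (hz : ‖z‖ ≤ t) (i : Fin n) :
    ‖cactions z i‖ ≤ t ^ 2 := by
  have h1 : ‖z.1 i‖ ≤ t := ((norm_le_pi_norm z.1 i).trans (norm_fst_le z)).trans hz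
  have h2 : ‖z.2 i‖ ≤ t := ((norm_le_pi_norm z.2 i).trans (norm_snd_le z)).trans hz
  have key : ‖cactions z i‖ ≤ (‖z.1 i‖ ^ 2 + ‖z.2 i‖ ^ 2) / 2 := by
    unfold cactions
    rw [norm_div]
    have : ‖(2 : ℂ)‖ = 2 := by norm_num
    rw [this]
    gcongr
    exact (norm_add_le _ _).trans (by rw [norm_pow, norm_pow])
  have h1' : ‖z.1 i‖ ^ 2 ≤ t ^ 2 := pow_le_pow_left₀ (norm_nonneg _) h1 2
  have h2' : ‖z.2 i‖ ^ 2 ≤ t ^ 2 := pow_le_pow_left₀ (norm_nonneg _) h2 2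
  linarith

lemma term_norm_le {n K : ℕ} (p : HomPoly n K) (hp : bombieriNormSq p ≤ 1) (z : CPhase n)
    {t : ℝ} (hz : ‖z‖ ≤ t) :
    ‖evalHomC p (cactions z)‖ ≤ (Real.sqrt n * t ^ 2) ^ K := by
  have ht : 0 ≤ t := (norm_nonneg z).trans hz
  have h := evalHomC_norm_le p (cactions z) (t ^ 2) (by positivity) (norm_cactions_le z hz)
  have hs : Real.sqrt (bombieriNormSq p) ≤ 1 := by
    rw [show (1 : ℝ) = Real.sqrt 1 from Real.sqrt_one.symm]
    exact Real.sqrt_le_sqrt hp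
  refine h.trans ?_
  exact mul_le_of_le_one_left (by positivity) hs

lemma summable_term {n : ℕ} (h : ∀ k : ℕ, HomPoly n (k + 1)) (hb : ∀ k, bombieriNormSq (h k) ≤ 1)
    (z : CPhase n) {t : ℝ} (hz : ‖z‖ ≤ t) (ht1 : Real.sqrt n * t ^ 2 < 1) :
    Summable fun k : ℕ => evalHomC (h k) (cactions z) := by
  have ht : 0 ≤ t := (norm_nonneg z).trans hz
  have hρ0 : (0 : ℝ) ≤ Real.sqrt n * t ^ 2 := by positivity
  have hg : Summable fun k : ℕ => (Real.sqrt n * t ^ 2) ^ (k + 1) := by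
    have := (summable_geometric_of_lt_one hρ0 ht1).mul_left (Real.sqrt n * t ^ 2)
    simpa [← pow_succ'] using this
  exact Summable.of_norm_bounded hg fun k => term_norm_le (h k) (hb k) z hz

-- ### derivatives

def projCLM1 (n : ℕ) (i : Fin n) : CPhase n →L[ℂ] ℂ :=
  (ContinuousLinearMap.proj i).comp (ContinuousLinearMap.fst ℂ (Fin n → ℂ) (Fin n → ℂ))

def projCLM2 (n : ℕ) (i : Fin n) : CPhase n →L[ℂ] ℂ :=
  (ContinuousLinearMap.proj i).comp (ContinuousLinearMap.snd ℂ (Fin n → ℂ) (Fin n → ℂ))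

def Ader {n : ℕ} (i : Fin n) (z : CPhase n) : CPhase n →L[ℂ] ℂ :=
  z.1 i • projCLM1 n i + z.2 i • projCLM2 n i

lemma Ader_apply {n : ℕ} (i : Fin n) (z w : CPhase n) :
    Ader i z w = z.1 i * w.1 i + z.2 i * w.2 i := by
  simp [Ader, projCLM1, projCLM2]

lemma norm_Ader_le {n : ℕ} (i : Fin n) (z : CPhase n) {t : ℝ} (hz : ‖z‖ ≤ t) :
    ‖Ader i z‖ ≤ 2 * t := by
  have ht : 0 ≤ t := (norm_nonneg z).trans hz
  refine ContinuousLinearMap.opNorm_le_bound _ (by positivity) fun w => ?_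
  rw [Ader_apply]
  have h1 : ‖z.1 i‖ ≤ t := ((norm_le_pi_norm z.1 i).trans (norm_fst_le z)).trans hz
  have h2 : ‖z.2 i‖ ≤ t := ((norm_le_pi_norm z.2 i).trans (norm_snd_le z)).trans hz
  have w1 : ‖w.1 i‖ ≤ ‖w‖ := (norm_le_pi_norm w.1 i).trans (norm_fst_le w)
  have w2 : ‖w.2 i‖ ≤ ‖w‖ := (norm_le_pi_norm w.2 i).trans (norm_snd_le w)
  calc ‖z.1 i * w.1 i + z.2 i * w.2 i‖ ≤ ‖z.1 i‖ * ‖w.1 i‖ + ‖z.2 i‖ * ‖w.2 i‖ := by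
        refine (norm_add_le _ _).trans ?_
        rw [norm_mul, norm_mul]
    _ ≤ t * ‖w‖ + t * ‖w‖ := by
        have a1 := mul_le_mul h1 w1 (norm_nonneg _) ht
        have a2 := mul_le_mul h2 w2 (norm_nonneg _) ht
        linarith
    _ = 2 * t * ‖w‖ := by ring

lemma hasFDerivAt_cact {n : ℕ} (i : Fin n) (z : CPhase n) :
    HasFDerivAt (fun w : CPhase n => cactions w i) (Ader i z) z := by
  have h1 : HasFDerivAt (fun w : CPhase n => w.1 i) (projCLM1 n i) z :=
    (projCLM1 n i).hasFDerivAt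
  have h2 : HasFDerivAt (fun w : CPhase n => w.2 i) (projCLM2 n i) z :=
    (projCLM2 n i).hasFDerivAt
  have h1sq := (hasDerivAt_pow 2 (z.1 i)).comp_hasFDerivAt z h1
  have h2sq := (hasDerivAt_pow 2 (z.2 i)).comp_hasFDerivAt z h2
  have hfun : (fun w : CPhase n => cactions w i)
      = fun w : CPhase n => (w.1 i ^ 2 + w.2 i ^ 2) * (2 : ℂ)⁻¹ := by
    funext w; simp [cactions, div_eq_mul_inv]
  rw [hfun]
  refine ((h1sq.add h2sq).mul_const ((2 : ℂ)⁻¹)).congr_fderiv ?_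
  refine ContinuousLinearMap.ext fun w => ?_
  simp [Ader_apply, projCLM1, projCLM2, smul_eq_mul]
  ring

def Dmon {n K : ℕ} (m : Sym (Fin n) K) (z : CPhase n) : CPhase n →L[ℂ] ℂ :=
  ∑ i : Fin n,
    (∏ j ∈ Finset.univ.erase i, cactions z j ^ Multiset.count j (m : Multiset (Fin n))) •
      (((Multiset.count i (m : Multiset (Fin n)) : ℂ) *
          cactions z i ^ (Multiset.count i (m : Multiset (Fin n)) - 1)) • Ader i z)

lemma hasFDerivAt_mon {n K : ℕ} (m : Sym (Fin n) K) (z : CPhase n) :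
    HasFDerivAt
      (fun z : CPhase n => ∏ i, cactions z i ^ Multiset.count i (m : Multiset (Fin n)))
      (Dmon m z) z := by
  classical
  exact HasFDerivAt.finset_prod fun i _ =>
    (hasDerivAt_pow _ (cactions z i)).comp_hasFDerivAt z (hasFDerivAt_cact i z)

lemma norm_Dmon_le {n K : ℕ} (m : Sym (Fin n) K) (z : CPhase n) {t : ℝ} (hz : ‖z‖ ≤ t) :
    ‖Dmon m z‖ ≤ 2 * K * t ^ (2 * K - 1) := by
  classical
  have ht : 0 ≤ t := (norm_nonneg z).trans hz
  set c : Fin n → ℕ := fun i => Multiset.count i (m : Multiset (Fin n)) with hc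
  have key : ∀ i : Fin n,
      ‖(∏ j ∈ Finset.univ.erase i, cactions z j ^ c j) •
        (((c i : ℂ) * cactions z i ^ (c i - 1)) • Ader i z)‖
      ≤ (c i : ℝ) * (2 * t ^ (2 * K - 1)) := by
    intro i
    by_cases hci : c i = 0
    · have h0 : ((c i : ℂ) * cactions z i ^ (c i - 1)) • Ader i z = 0 := by
        refine ContinuousLinearMap.ext fun w => ?_
        rw [hci]
        simp
      have h2 : (∏ j ∈ Finset.univ.erase i, cactions z j ^ c j) •
          (0 : CPhase n →L[ℂ] ℂ) = 0 := ContinuousLinearMap.ext fun w => by simp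
      rw [h0, h2]
      exact le_trans (le_of_eq norm_zero) (by positivity)
    · have hci1 : 1 ≤ c i := Nat.one_le_iff_ne_zero.2 hci
      have hciK : c i ≤ K := by
        calc c i ≤ ∑ j, c j := Finset.single_le_sum (fun j _ => Nat.zero_le _) (Finset.mem_univ i)
          _ = K := sum_count_eq m
      have hsum_erase : ∑ j ∈ Finset.univ.erase i, c j = K - c i := by
        have h1 := Finset.add_sum_erase Finset.univ c (Finset.mem_univ i)
        have h2 : ∑ j : Fin n, c j = K := sum_count_eq m
        omega
      have hprod : ‖∏ j ∈ Finset.univ.erase i, cactions z j ^ c j‖ ≤ (t ^ 2) ^ (K - c i) := by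
        rw [norm_prod]
        calc ∏ j ∈ Finset.univ.erase i, ‖cactions z j ^ c j‖
            = ∏ j ∈ Finset.univ.erase i, ‖cactions z j‖ ^ c j :=
              Finset.prod_congr rfl fun j _ => norm_pow _ _
          _ ≤ ∏ j ∈ Finset.univ.erase i, (t ^ 2) ^ c j :=
              Finset.prod_le_prod (fun j _ => by positivity)
                (fun j _ => pow_le_pow_left₀ (norm_nonneg _) (norm_cactions_le z hz j) _)
          _ = (t ^ 2) ^ ∑ j ∈ Finset.univ.erase i, c j := Finset.prod_pow_eq_pow_sum _ _ _
          _ = (t ^ 2) ^ (K - c i) := by rw [hsum_erase]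
      have hcact : ‖cactions z i‖ ^ (c i - 1) ≤ (t ^ 2) ^ (c i - 1) :=
        pow_le_pow_left₀ (norm_nonneg _) (norm_cactions_le z hz i) _
      have hA := norm_Ader_le i z hz
      calc ‖(∏ j ∈ Finset.univ.erase i, cactions z j ^ c j) •
              (((c i : ℂ) * cactions z i ^ (c i - 1)) • Ader i z)‖
          ≤ ‖∏ j ∈ Finset.univ.erase i, cactions z j ^ c j‖ *
              ‖((c i : ℂ) * cactions z i ^ (c i - 1)) • Ader i z‖ :=
            ContinuousLinearMap.opNorm_smul_le _ _
        _ ≤ ‖∏ j ∈ Finset.univ.erase i, cactions z j ^ c j‖ *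
              (‖(c i : ℂ) * cactions z i ^ (c i - 1)‖ * ‖Ader i z‖) :=
            mul_le_mul_of_nonneg_left (ContinuousLinearMap.opNorm_smul_le _ _) (norm_nonneg _)
        _ = ‖∏ j ∈ Finset.univ.erase i, cactions z j ^ c j‖ *
              ((c i : ℝ) * ‖cactions z i‖ ^ (c i - 1) * ‖Ader i z‖) := by
            rw [norm_mul, norm_pow, Complex.norm_natCast]
        _ ≤ (t ^ 2) ^ (K - c i) * ((c i : ℝ) * (t ^ 2) ^ (c i - 1) * (2 * t)) := by
            gcongr <;> first | exact norm_nonneg _ | skip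
        _ = (c i : ℝ) * (2 * ((t ^ 2) ^ (K - c i) * (t ^ 2) ^ (c i - 1) * t)) := by ring
        _ = (c i : ℝ) * (2 * t ^ (2 * K - 1)) := by
            congr 2
            rw [← pow_mul, ← pow_mul, ← pow_add, ← pow_succ]
            congr 1
            omega
  refine (norm_sum_le _ _).trans ?_
  refine (Finset.sum_le_sum fun i _ => key i).trans (le_of_eq ?_)
  rw [← Finset.sum_mul]
  have : ∑ i : Fin n, (c i : ℝ) = (K : ℝ) := by exact_mod_cast sum_count_eq m
  rw [this]
  ring

def Dpoly {n K : ℕ} (p : HomPoly n K) (z : CPhase n) : CPhase n →L[ℂ] ℂ :=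
  ∑ m : Sym (Fin n) K, (p m : ℂ) • Dmon m z

lemma hasFDerivAt_eval {n K : ℕ} (p : HomPoly n K) (z : CPhase n) :
    HasFDerivAt (fun z : CPhase n => evalHomC p (cactions z)) (Dpoly p z) z := by
  classical
  exact HasFDerivAt.fun_sum fun m _ => (hasFDerivAt_mon m z).const_mul _

lemma continuous_eval {n K : ℕ} (p : HomPoly n K) :
    Continuous fun z : CPhase n => evalHomC p (cactions z) :=
  Differentiable.continuous fun z => (hasFDerivAt_eval p z).differentiableAt

lemma norm_Dpoly_le {n K : ℕ} (p : HomPoly n K) (hp : bombieriNormSq p ≤ 1) (z : CPhase n)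
    {t : ℝ} (hz : ‖z‖ ≤ t) :
    ‖Dpoly p z‖ ≤ Real.sqrt n ^ K * (2 * K * t ^ (2 * K - 1)) := by
  have ht : 0 ≤ t := (norm_nonneg z).trans hz
  have step1 : ‖Dpoly p z‖ ≤ ∑ m : Sym (Fin n) K, |p m| * (2 * K * t ^ (2 * K - 1)) := by
    refine (norm_sum_le _ _).trans (Finset.sum_le_sum fun m _ => ?_)
    refine (ContinuousLinearMap.opNorm_smul_le _ _).trans ?_
    rw [Complex.norm_real, Real.norm_eq_abs]
    exact mul_le_mul_of_nonneg_left (norm_Dmon_le m z hz) (abs_nonneg _)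
  have step2 := sum_abs_mul_le p (fun _ => 2 * K * t ^ (2 * K - 1)) (fun _ => by positivity)
  have hs1 : Real.sqrt (bombieriNormSq p) ≤ 1 := by
    rw [show (1 : ℝ) = Real.sqrt 1 from Real.sqrt_one.symm]
    exact Real.sqrt_le_sqrt hp
  have e : Real.sqrt (∑ m : Sym (Fin n) K, (multinomCoeff m : ℝ) * (2 * K * t ^ (2 * K - 1)) ^ 2)
      = Real.sqrt n ^ K * (2 * K * t ^ (2 * K - 1)) := by
    rw [← Finset.sum_mul, sum_multinomCoeff]
    have h2 : Real.sqrt n ^ 2 = (n : ℝ) := Real.sq_sqrt (by positivity)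
    have h3 : (Real.sqrt n ^ K * (2 * K * t ^ (2 * K - 1))) ^ 2
        = (Real.sqrt n ^ 2) ^ K * (2 * K * t ^ (2 * K - 1)) ^ 2 := by ring
    have : (n : ℝ) ^ K * (2 * K * t ^ (2 * K - 1)) ^ 2
        = (Real.sqrt n ^ K * (2 * K * t ^ (2 * K - 1))) ^ 2 := by rw [h3, h2]
    rw [this, Real.sqrt_sq (by positivity)]
  calc ‖Dpoly p z‖ ≤ ∑ m : Sym (Fin n) K, |p m| * (2 * K * t ^ (2 * K - 1)) := step1
    _ ≤ Real.sqrt (bombieriNormSq p) *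
        Real.sqrt (∑ m : Sym (Fin n) K, (multinomCoeff m : ℝ) * (2 * K * t ^ (2 * K - 1)) ^ 2) :=
        step2
    _ = Real.sqrt (bombieriNormSq p) * (Real.sqrt n ^ K * (2 * K * t ^ (2 * K - 1))) := by rw [e]
    _ ≤ 1 * (Real.sqrt n ^ K * (2 * K * t ^ (2 * K - 1))) := by
        refine mul_le_mul_of_nonneg_right hs1 (by positivity)
    _ = _ := one_mul _

-- ### summability of derivative bounds

lemma summable_aux {ρ : ℝ} (h0 : 0 ≤ ρ) (h1 : ρ < 1) (C : ℝ) :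
    Summable fun k : ℕ => C * ((k + 1 : ℝ) * ρ ^ k) := by
  have h1' : ‖ρ‖ < 1 := by rwa [Real.norm_eq_abs, abs_of_nonneg h0]
  have a := summable_pow_mul_geometric_of_norm_lt_one 1 h1'
  have b := summable_geometric_of_lt_one h0 h1
  refine ((a.add b).mul_left C).congr fun k => ?_
  push_cast
  ring

lemma differentiableAt_F {n : ℕ} (h : ∀ k : ℕ, HomPoly n (k + 1))
    (hb : ∀ k, bombieriNormSq (h k) ≤ 1) {s' : ℝ} (hs'0 : 0 < s')
    (hρ : Real.sqrt n * s' ^ 2 < 1) :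
    ∀ x ∈ ball (0 : CPhase n) s',
      DifferentiableAt ℂ (fun z : CPhase n => ∑' k : ℕ, evalHomC (h k) (cactions z)) x := by
  intro x hx
  set ρ := Real.sqrt n * s' ^ 2 with hρdef
  have hρ0 : 0 ≤ ρ := by positivity
  set u : ℕ → ℝ := fun k => (2 * Real.sqrt n * s') * ((k + 1 : ℝ) * ρ ^ k) with hu_def
  have hu : Summable u := summable_aux hρ0 hρ _
  have hder : ∀ (k : ℕ) (z : CPhase n), z ∈ ball (0 : CPhase n) s' →
      HasFDerivAt (fun z : CPhase n => evalHomC (h k) (cactions z)) (Dpoly (h k) z) z :=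
    fun k z _ => hasFDerivAt_eval (h k) z
  have hbound : ∀ (k : ℕ) (z : CPhase n), z ∈ ball (0 : CPhase n) s' →
      ‖Dpoly (h k) z‖ ≤ u k := by
    intro k z hzb
    have hz : ‖z‖ ≤ s' := by
      rw [mem_ball, dist_zero_right] at hzb; exact hzb.le
    refine (norm_Dpoly_le (h k) (hb k) z hz).trans (le_of_eq ?_)
    have he : 2 * (k + 1) - 1 = 2 * k + 1 := by omega
    rw [he]
    simp only [hu_def, hρdef]
    have e1 : s' ^ (2 * k + 1) = (s' ^ 2) ^ k * s' := by rw [pow_succ, pow_mul]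
    have e2 : Real.sqrt n ^ (k + 1) = Real.sqrt n ^ k * Real.sqrt n := pow_succ _ _
    rw [e1, e2, mul_pow]
    push_cast
    ring
  have hz0 : ‖(0 : CPhase n)‖ ≤ s' := by rw [norm_zero]; exact hs'0.le
  have hsum0 : Summable fun k : ℕ => evalHomC (h k) (cactions (0 : CPhase n)) :=
    summable_term h hb 0 hz0 hρ
  exact (hasFDerivAt_tsum_of_isPreconnected hu isOpen_ball
    (convex_ball (0 : CPhase n) s').isPreconnected hder hbound
    (mem_ball_self hs'0) hsum0 hx).differentiableAt

-- ### compactness of the Bombieri unit ball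

lemma continuous_bombieriNormSq {n k : ℕ} : Continuous fun p : HomPoly n k => bombieriNormSq p :=
  continuous_finset_sum _ fun m _ => ((continuous_apply m).pow 2).div_const _

lemma unitBall_subset_closedBall {n k : ℕ} :
    bombieriUnitBall n k ⊆ closedBall 0 (Real.sqrt (Nat.factorial k)) := by
  intro p hp
  rw [mem_closedBall, dist_zero_right]
  rw [pi_norm_le_iff_of_nonneg (Real.sqrt_nonneg _)]
  intro m
  have hC : (0 : ℝ) < (multinomCoeff m : ℝ) := by exact_mod_cast multinomCoeff_pos m
  have hp' : bombieriNormSq p ≤ 1 := hp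
  have h1 : (p m) ^ 2 / (multinomCoeff m : ℝ) ≤ 1 :=
    le_trans (le_trans (le_of_eq rfl) (Finset.single_le_sum
      (f := fun m : Sym (Fin n) k => (p m) ^ 2 / (multinomCoeff m : ℝ))
      (fun m _ => div_nonneg (sq_nonneg _) (Nat.cast_nonneg _)) (Finset.mem_univ m))) hp' 
  have h2 : (p m) ^ 2 ≤ (multinomCoeff m : ℝ) := by rwa [div_le_one hC] at h1
  have h3 : multinomCoeff m ≤ Nat.factorial k := by
    have hdvd : multinomCoeff m ∣ (∑ i, Multiset.count i (m : Multiset (Fin n))).factorial :=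
      ⟨_, (Nat.multinomial_spec _ _).symm.trans (mul_comm _ _)⟩
    have := Nat.le_of_dvd (Nat.factorial_pos _) hdvd
    rwa [sum_count_eq] at this
  have h4 : (p m) ^ 2 ≤ (Nat.factorial k : ℝ) := h2.trans (by exact_mod_cast h3)
  calc ‖p m‖ = Real.sqrt ((p m) ^ 2) := by rw [Real.sqrt_sq_eq_abs, Real.norm_eq_abs]
    _ ≤ Real.sqrt (Nat.factorial k) := Real.sqrt_le_sqrt h4

lemma isCompact_unitBall {n k : ℕ} : IsCompact (bombieriUnitBall n k) := by
  have hclosed : IsClosed (bombieriUnitBall n k) :=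
    isClosed_le continuous_bombieriNormSq continuous_const
  exact (isCompact_closedBall (0 : HomPoly n k) _).of_isClosed_subset hclosed
    unitBall_subset_closedBall

lemma measurableSet_unitBall {n k : ℕ} : MeasurableSet (bombieriUnitBall n k) :=
  isCompact_unitBall.isClosed.measurableSet

lemma muk_compl_eq_zero (n k : ℕ) : muk n k (bombieriUnitBall n k)ᶜ = 0 := by
  unfold muk
  rw [Measure.smul_apply, Measure.restrict_apply measurableSet_unitBall.compl]
  simp

lemma isProbabilityMeasure_muk (n k : ℕ) (hn : 1 ≤ n) : IsProbabilityMeasure (muk n k) := by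
  constructor
  unfold muk
  rw [Measure.smul_apply, Measure.restrict_apply MeasurableSet.univ, Set.univ_inter,
    smul_eq_mul]
  have hfin : volume (bombieriUnitBall n k) < ⊤ :=
    lt_of_le_of_lt (measure_mono unitBall_subset_closedBall) measure_closedBall_lt_top
  have hpos : 0 < volume (bombieriUnitBall n k) := by
    haveI : Nonempty (Sym (Fin n) k) := ⟨Sym.replicate k ⟨0, hn⟩⟩
    set d : ℝ := (Fintype.card (Sym (Fin n) k) : ℝ) with hd_def
    have hd : 0 < d := by
      rw [hd_def]
      exact_mod_cast Fintype.card_pos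
    have hδ : 0 < Real.sqrt (1 / d) := Real.sqrt_pos.2 (by positivity)
    have hsub : ball (0 : HomPoly n k) (Real.sqrt (1 / d)) ⊆ bombieriUnitBall n k := by
      intro p hp
      rw [mem_ball, dist_zero_right] at hp
      have heach : ∀ m : Sym (Fin n) k, (p m) ^ 2 / (multinomCoeff m : ℝ) ≤ 1 / d := by
        intro m
        have hC1 : (1 : ℝ) ≤ (multinomCoeff m : ℝ) := by
          exact_mod_cast Nat.one_le_iff_ne_zero.2 (Nat.pos_iff_ne_zero.1 (multinomCoeff_pos m))
        have hpm : ‖p m‖ ≤ ‖p‖ := norm_le_pi_norm p m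
        have h1 : (p m) ^ 2 < 1 / d := by
          have hsq : (p m) ^ 2 ≤ ‖p‖ ^ 2 := by
            calc (p m) ^ 2 = ‖p m‖ ^ 2 := by rw [Real.norm_eq_abs, sq_abs]
              _ ≤ ‖p‖ ^ 2 := pow_le_pow_left₀ (norm_nonneg _) hpm 2
          have h2 : ‖p‖ ^ 2 < Real.sqrt (1 / d) ^ 2 :=
            pow_lt_pow_left₀ hp (norm_nonneg _) (by norm_num)
          rw [Real.sq_sqrt (by positivity : (0:ℝ) ≤ 1 / d)] at h2
          linarith
        calc (p m) ^ 2 / (multinomCoeff m : ℝ) ≤ (p m) ^ 2 :=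
              div_le_self (sq_nonneg _) hC1
          _ ≤ 1 / d := h1.le
      show bombieriNormSq p ≤ 1
      calc bombieriNormSq p ≤ ∑ _m : Sym (Fin n) k, 1 / d :=
            Finset.sum_le_sum fun m _ => heach m
        _ = d * (1 / d) := by
            rw [Finset.sum_const, Finset.card_univ, nsmul_eq_mul, hd_def]
        _ = 1 := by field_simp
    exact lt_of_lt_of_le (measure_ball_pos volume 0 hδ) (measure_mono hsub)
  exact ENNReal.inv_mul_cancel (ne_of_gt hpos) (ne_of_lt hfin)

-- ### geometric series helper

lemma summable_geom_succ {ρ : ℝ} (h0 : 0 ≤ ρ) (h1 : ρ < 1) :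
    Summable fun k : ℕ => ρ ^ (k + 1) := by
  have := (summable_geometric_of_lt_one h0 h1).mul_left ρ
  simpa [← pow_succ'] using this

lemma tsum_geom_succ {ρ : ℝ} (h0 : 0 ≤ ρ) (h1 : ρ < 1) :
    ∑' k : ℕ, ρ ^ (k + 1) = ρ / (1 - ρ) := by
  have : ∀ k : ℕ, ρ ^ (k + 1) = ρ * ρ ^ k := fun k => pow_succ' ρ k
  rw [tsum_congr this, tsum_mul_left, tsum_geometric_of_lt_one h0 h1, div_eq_mul_inv]

-- ### realness at real points

lemma term_real {n K : ℕ} (p : HomPoly n K) (w : RPhase n) :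
    (evalHomC p (cactions (embedR w))).im = 0 := by
  have : evalHomC p (cactions (embedR w)) =
      ((∑ m : Sym (Fin n) K, p m * ∏ i, ((w.1 i ^ 2 + w.2 i ^ 2) / 2) ^
        Multiset.count i (m : Multiset (Fin n)) : ℝ) : ℂ) := by
    unfold evalHomC cactions embedR
    push_cast
    rfl
  rw [this, Complex.ofReal_im]

-- ### continuity on the closed ball

lemma continuousOn_tsumF {n : ℕ} (h : ∀ k : ℕ, HomPoly n (k + 1))
    (hb : ∀ k, bombieriNormSq (h k) ≤ 1) {s : ℝ} (hρ : Real.sqrt n * s ^ 2 < 1) :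
    ContinuousOn (fun z : CPhase n => ∑' k : ℕ, evalHomC (h k) (cactions z))
      (closedBall 0 s) := by
  have hρ0 : (0 : ℝ) ≤ Real.sqrt n * s ^ 2 := by positivity
  have hg : Summable fun k : ℕ => (Real.sqrt n * s ^ 2) ^ (k + 1) := summable_geom_succ hρ0 hρ
  refine (tendstoUniformlyOn_tsum_nat hg fun k z hz => ?_).continuousOn
    (Frequently.of_forall fun N => ?_)
  · exact term_norm_le (h k) (hb k) z (by rwa [mem_closedBall, dist_zero_right] at hz)
  · exact (continuous_finset_sum _ fun k _ => continuous_eval (h k)).continuousOn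

-- ### truncation

def trunc {n : ℕ} (h : ∀ k : ℕ, HomPoly n (k + 1)) : ∀ k : ℕ, HomPoly n (k + 1) :=
  fun k => if bombieriNormSq (h k) ≤ 1 then h k else 0

lemma bombieriNormSq_zero {n k : ℕ} : bombieriNormSq (0 : HomPoly n k) = 0 := by
  unfold bombieriNormSq
  simp

lemma trunc_le {n : ℕ} (h : ∀ k : ℕ, HomPoly n (k + 1)) (k : ℕ) :
    bombieriNormSq (trunc h k) ≤ 1 := by
  unfold trunc
  split_ifs with hk
  · exact hk
  · rw [bombieriNormSq_zero]; norm_num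

lemma trunc_eq {n : ℕ} (h : ∀ k : ℕ, HomPoly n (k + 1))
    (hb : ∀ k, bombieriNormSq (h k) ≤ 1) : trunc h = h :=
  funext fun k => if_pos (hb k)

-- ### algebraic properties of evalHomC in the coefficients

lemma evalHomC_add {n K : ℕ} (p q : HomPoly n K) (I : Fin n → ℂ) :
    evalHomC (p + q) I = evalHomC p I + evalHomC q I := by
  unfold evalHomC
  rw [← Finset.sum_add_distrib]
  refine Finset.sum_congr rfl fun m _ => ?_
  have : (p + q) m = p m + q m := rfl
  rw [this]
  push_cast
  ring

lemma evalHomC_smul {n K : ℕ} (a : ℝ) (p : HomPoly n K) (I : Fin n → ℂ) :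
    evalHomC (a • p) I = (a : ℂ) * evalHomC p I := by
  unfold evalHomC
  rw [Finset.mul_sum]
  refine Finset.sum_congr rfl fun m _ => ?_
  have : (a • p) m = a * p m := rfl
  rw [this]
  push_cast
  ring

-- ### the embedding into continuous maps

section CM

variable {n : ℕ} {s : ℝ}

/-- Evaluation of the Hamiltonian built from a homogeneous polynomial, as a continuous map
on the closed ball. -/
def evalCM (s : ℝ) {K : ℕ} (p : HomPoly n K) : C(closedBall (0 : CPhase n) s, ℂ) :=
  ⟨Set.restrict _ (fun z => evalHomC p (cactions z)),
    (continuous_eval p).continuousOn.restrict⟩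

lemma evalCM_apply (s : ℝ) {K : ℕ} (p : HomPoly n K) (z : closedBall (0 : CPhase n) s) :
    evalCM s p z = evalHomC p (cactions (z : CPhase n)) := rfl

/-- `evalCM` as a linear map. -/
def evalCML (n : ℕ) (s : ℝ) (K : ℕ) :
    HomPoly n K →ₗ[ℝ] C(closedBall (0 : CPhase n) s, ℂ) where
  toFun := evalCM s
  map_add' p q := by
    ext z
    simp only [evalCM_apply, ContinuousMap.add_apply, evalHomC_add]
  map_smul' a p := by
    ext z
    simp only [evalCM_apply, ContinuousMap.smul_apply, evalHomC_smul, RingHom.id_apply,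
      Complex.real_smul]

variable [CompactSpace (closedBall (0 : CPhase n) s)]

lemma continuous_evalCM (K : ℕ) : Continuous fun p : HomPoly n K => evalCM (n := n) s p :=
  LinearMap.continuous_of_finiteDimensional (evalCML n s K)

lemma norm_evalCM_le {K : ℕ} (hs0 : 0 ≤ s) (p : HomPoly n K) (hp : bombieriNormSq p ≤ 1) :
    ‖evalCM (n := n) s p‖ ≤ (Real.sqrt n * s ^ 2) ^ K := by
  rw [ContinuousMap.norm_le _ (by positivity)]
  intro z
  rw [evalCM_apply]
  refine term_norm_le p hp _ ?_
  have := z.2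
  rwa [mem_closedBall, dist_zero_right] at this

lemma summable_evalCM (h : ∀ k : ℕ, HomPoly n (k + 1)) (hb : ∀ k, bombieriNormSq (h k) ≤ 1)
    (hs0 : 0 ≤ s) (hρ : Real.sqrt n * s ^ 2 < 1) :
    Summable fun k : ℕ => evalCM (n := n) s (h k) := by
  have hρ0 : (0 : ℝ) ≤ Real.sqrt n * s ^ 2 := by positivity
  exact Summable.of_norm_bounded (summable_geom_succ hρ0 hρ)
    fun k => norm_evalCM_le hs0 (h k) (hb k)

lemma tsum_evalCM_apply (h : ∀ k : ℕ, HomPoly n (k + 1)) (hb : ∀ k, bombieriNormSq (h k) ≤ 1)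
    (hs0 : 0 ≤ s) (hρ : Real.sqrt n * s ^ 2 < 1) (z : closedBall (0 : CPhase n) s) :
    (∑' k : ℕ, evalCM (n := n) s (h k)) z = ∑' k : ℕ, evalHomC (h k) (cactions (z : CPhase n)) := by
  have hsum := summable_evalCM h hb hs0 hρ
  have := (ContinuousMap.evalCLM ℂ z).map_tsum hsum
  simpa [ContinuousMap.evalCLM, evalCM_apply] using this

end CM

/-- **Compact embedding of the Hilbert brick into the space of analytic Hamiltonians.**
If `√n·s² < 1` then for every `h` in the Hilbert brick the series `Σ_k h_k(I(z))` converges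
uniformly on `D_s` to a holomorphic function of sup norm `≤ √n s²/(1−√n s²)`, real for real
arguments; the resulting map `ι` into `C(D_s, ℂ)` (sup-norm topology) is continuous on the
brick for the product topology, its image is compact, and the pushforward `ι_*μ` of the
product probability measure is a compactly supported Borel probability measure. -/
theorem hilbert_brick_compact_embedding
    {n : ℕ} (hn : 1 ≤ n) (s : ℝ) (hs0 : 0 < s) (hs1 : s < 1)
    (hsn : Real.sqrt n * s ^ 2 < 1)
    (F : (∀ k : ℕ, HomPoly n (k + 1)) → CPhase n → ℂ)
    (hF : ∀ h z, F h z = ∑' k : ℕ, evalHomC (h k) (cactions z))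
    (Brick : Set (∀ k : ℕ, HomPoly n (k + 1)))
    (hBrick : Brick = {h | ∀ k, bombieriNormSq (h k) ≤ 1})
    (μ : Measure (∀ k : ℕ, HomPoly n (k + 1))) [IsProbabilityMeasure μ]
    (hμ : ∀ m : ℕ, Measure.map (fun h (k : Fin m) => h k) μ =
      Measure.pi fun k : Fin m => muk n (k + 1)) :
    (∀ h ∈ Brick,
      TendstoUniformlyOn
        (fun (N : ℕ) (z : CPhase n) => ∑ k ∈ Finset.range N, evalHomC (h k) (cactions z))
        (F h) atTop (closedBall 0 s)) ∧
    (∀ h ∈ Brick,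
      DifferentiableOn ℂ (F h) (closedBall 0 s) ∧
      RealOnRealOn (F h) (closedBall 0 s) ∧
      ∀ z ∈ closedBall (0 : CPhase n) s,
        ‖F h z‖ ≤ Real.sqrt n * s ^ 2 / (1 - Real.sqrt n * s ^ 2)) ∧
    (letI : MeasurableSpace C(closedBall (0 : CPhase n) s, ℂ) := borel _
     ∃ ι : (∀ k : ℕ, HomPoly n (k + 1)) → C(closedBall (0 : CPhase n) s, ℂ),
       (∀ h ∈ Brick, ∀ z : closedBall (0 : CPhase n) s, ι h z = F h (z : CPhase n)) ∧
       ContinuousOn ι Brick ∧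
       IsCompact (ι '' Brick) ∧
       IsProbabilityMeasure (μ.map ι) ∧
       ∃ K : Set C(closedBall (0 : CPhase n) s, ℂ), IsCompact K ∧ μ.map ι Kᶜ = 0) := by
  subst hBrick
  set r : ℝ := Real.sqrt n * s ^ 2 with hr_def
  have hn' : (0 : ℝ) < n := by exact_mod_cast hn
  have hsqrtn : (1 : ℝ) ≤ Real.sqrt n := by
    rw [show (1 : ℝ) = Real.sqrt 1 from Real.sqrt_one.symm]
    exact Real.sqrt_le_sqrt (by exact_mod_cast hn)
  have hr0 : 0 < r := by rw [hr_def]; positivity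
  have hg : Summable fun k : ℕ => r ^ (k + 1) := summable_geom_succ hr0.le hsn
  -- part 1
  have part1 : ∀ h ∈ {h : ∀ k : ℕ, HomPoly n (k + 1) | ∀ k, bombieriNormSq (h k) ≤ 1},
      TendstoUniformlyOn
        (fun (N : ℕ) (z : CPhase n) => ∑ k ∈ Finset.range N, evalHomC (h k) (cactions z))
        (F h) atTop (closedBall 0 s) := by
    intro h hb
    refine (tendstoUniformlyOn_tsum_nat hg fun k z hz => ?_).congr_right
      fun z _ => (hF h z).symm
    exact term_norm_le (h k) (hb k) z (by rwa [mem_closedBall, dist_zero_right] at hz)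
  refine ⟨part1, ?_, ?_⟩
  · -- part 2
    intro h hb
    have hFe : F h = fun z : CPhase n => ∑' k : ℕ, evalHomC (h k) (cactions z) :=
      funext (hF h)
    -- choose a slightly bigger radius
    set c : ℝ := Real.sqrt ((1 + r) / (2 * r)) with hc_def
    have hquot : (1 : ℝ) < (1 + r) / (2 * r) := by
      rw [lt_div_iff₀ (by linarith)]
      linarith
    have hc1 : 1 < c := by
      rw [hc_def]
      exact (Real.lt_sqrt zero_le_one).2 (by rwa [one_pow])
    set s' : ℝ := s * c with hs'_def
    have hs'0 : 0 < s' := by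
      rw [hs'_def]
      exact mul_pos hs0 (lt_trans one_pos hc1)
    have hss' : s < s' := by
      rw [hs'_def]
      nlinarith
    have hρ' : Real.sqrt n * s' ^ 2 < 1 := by
      have hc2 : c ^ 2 = (1 + r) / (2 * r) := Real.sq_sqrt (by positivity)
      have : Real.sqrt n * s' ^ 2 = (1 + r) / 2 := by
        rw [hs'_def, mul_pow, ← mul_assoc, ← hr_def, hc2]
        field_simp
      rw [this]
      linarith
    have hdiff := differentiableAt_F h hb hs'0 hρ'
    refine ⟨?_, ?_, ?_⟩
    · rw [hFe]
      intro z hz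
      refine (hdiff z ?_).differentiableWithinAt
      rw [mem_ball, dist_zero_right]
      rw [mem_closedBall, dist_zero_right] at hz
      exact lt_of_le_of_lt hz hss'
    · intro w hw
      rw [hF]
      have hwn : ‖embedR w‖ ≤ s := by
        rwa [mem_closedBall, dist_zero_right] at hw
      have hsum := summable_term h hb _ hwn hsn
      have hmap := (Complex.imCLM).map_tsum hsum
      have : (∑' k : ℕ, evalHomC (h k) (cactions (embedR w))).im
          = ∑' k : ℕ, (evalHomC (h k) (cactions (embedR w))).im := by
        simpa [Complex.imCLM_apply] using hmap
      rw [this]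
      simp [term_real]
    · intro z hz
      rw [hF]
      have hzn : ‖z‖ ≤ s := by rwa [mem_closedBall, dist_zero_right] at hz
      have hnorm : ∀ k : ℕ, ‖evalHomC (h k) (cactions z)‖ ≤ r ^ (k + 1) :=
        fun k => term_norm_le (h k) (hb k) z hzn
      have hsumn : Summable fun k : ℕ => ‖evalHomC (h k) (cactions z)‖ :=
        Summable.of_nonneg_of_le (fun k => norm_nonneg _) hnorm hg
      calc ‖∑' k : ℕ, evalHomC (h k) (cactions z)‖
          ≤ ∑' k : ℕ, ‖evalHomC (h k) (cactions z)‖ := norm_tsum_le_tsum_norm hsumn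
        _ ≤ ∑' k : ℕ, r ^ (k + 1) := hsumn.tsum_le_tsum hnorm hg
        _ = r / (1 - r) := tsum_geom_succ hr0.le hsn
  · -- part 3
    letI : MeasurableSpace C(closedBall (0 : CPhase n) s, ℂ) := borel _
    haveI : BorelSpace C(closedBall (0 : CPhase n) s, ℂ) := ⟨rfl⟩
    haveI : CompactSpace (closedBall (0 : CPhase n) s) :=
      isCompact_iff_compactSpace.mp (isCompact_closedBall _ _)
    set Brick : Set (∀ k : ℕ, HomPoly n (k + 1)) :=
      {h | ∀ k, bombieriNormSq (h k) ≤ 1} with hBrick_def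
    set ι : (∀ k : ℕ, HomPoly n (k + 1)) → C(closedBall (0 : CPhase n) s, ℂ) :=
      fun h => ⟨Set.restrict _ (fun z => ∑' k : ℕ, evalHomC (trunc h k) (cactions z)),
        (continuousOn_tsumF (trunc h) (trunc_le h) hsn).restrict⟩ with hι_def
    have hι_eqF : ∀ h ∈ Brick, ∀ z : closedBall (0 : CPhase n) s,
        ι h z = F h (z : CPhase n) := by
      intro h hb z
      rw [hF, hι_def]
      simp only [ContinuousMap.coe_mk, Set.restrict_apply]
      show ∑' k : ℕ, evalHomC (trunc h k) (cactions (z : CPhase n)) = _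
      rw [trunc_eq h hb]
    have hι_tsum : ∀ h ∈ Brick, ι h = ∑' k : ℕ, evalCM (n := n) s (h k) := by
      intro h hb
      refine ContinuousMap.ext fun z => ?_
      rw [tsum_evalCM_apply h hb hs0.le hsn z, hι_def]
      simp only [ContinuousMap.coe_mk, Set.restrict_apply]
      show ∑' k : ℕ, evalHomC (trunc h k) (cactions (z : CPhase n)) = _
      rw [trunc_eq h hb]
    have hcontOn : ContinuousOn ι Brick := by
      have htu : TendstoUniformlyOn
          (fun (N : ℕ) (h : ∀ k : ℕ, HomPoly n (k + 1)) =>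
            ∑ k ∈ Finset.range N, evalCM (n := n) s (h k))
          ι atTop Brick := by
        refine (tendstoUniformlyOn_tsum_nat hg fun k h hb => ?_).congr_right
          fun h hb => (hι_tsum h hb).symm
        exact norm_evalCM_le hs0.le (h k) (hb k)
      refine htu.continuousOn (Frequently.of_forall fun N => ?_)
      exact (continuous_finset_sum _ fun k _ =>
        (continuous_evalCM (k + 1)).comp (continuous_apply k)).continuousOn
    have hBrick_compact : IsCompact Brick := by
      have : Brick = Set.pi univ (fun k : ℕ => bombieriUnitBall n (k + 1)) := by
        ext h
        simp [hBrick_def, bombieriUnitBall, Set.mem_pi]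
      rw [this]
      exact isCompact_univ_pi fun k => isCompact_unitBall
    have hBrick_meas : MeasurableSet Brick := by
      have : Brick = ⋂ k : ℕ, {h : ∀ k : ℕ, HomPoly n (k + 1) | bombieriNormSq (h k) ≤ 1} := by
        ext h; simp [hBrick_def]
      rw [this]
      refine MeasurableSet.iInter fun k => ?_
      exact measurableSet_le
        ((continuous_bombieriNormSq.measurable).comp (measurable_pi_apply k)) measurable_const
    -- the brick has full measure
    haveI hmukP : ∀ (m : ℕ) (j : Fin m), IsProbabilityMeasure (muk n (j + 1)) :=
      fun m j => isProbabilityMeasure_muk n (j + 1) hn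
    have hS : ∀ k : ℕ, μ {h : ∀ k : ℕ, HomPoly n (k + 1) | ¬ bombieriNormSq (h k) ≤ 1} = 0 := by
      intro k
      haveI := hmukP (k + 1)
      set i₀ : Fin (k + 1) := ⟨k, Nat.lt_succ_self k⟩
      have hπ : Measurable (fun h : (∀ j : ℕ, HomPoly n (j + 1)) => fun j : Fin (k + 1) => h j) :=
        measurable_pi_lambda _ fun j => measurable_pi_apply _
      have hTm : MeasurableSet
          {f : ∀ j : Fin (k + 1), HomPoly n (j + 1) | ¬ bombieriNormSq (f i₀) ≤ 1} := by
        have hmf : Measurable fun f : (∀ j : Fin (k + 1), HomPoly n (j + 1)) =>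
            bombieriNormSq (f i₀) :=
          (continuous_bombieriNormSq.measurable).comp (measurable_pi_apply i₀)
        have : {f : ∀ j : Fin (k + 1), HomPoly n (j + 1) | ¬ bombieriNormSq (f i₀) ≤ 1}
            = {f : ∀ j : Fin (k + 1), HomPoly n (j + 1) | bombieriNormSq (f i₀) ≤ 1}ᶜ := by
          ext f; simp
        rw [this]
        exact (measurableSet_le hmf measurable_const).compl
      have hpre : {h : ∀ k : ℕ, HomPoly n (k + 1) | ¬ bombieriNormSq (h k) ≤ 1}
          = (fun h : (∀ j : ℕ, HomPoly n (j + 1)) => fun j : Fin (k + 1) => h j) ⁻¹'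
            {f : ∀ j : Fin (k + 1), HomPoly n (j + 1) | ¬ bombieriNormSq (f i₀) ≤ 1} := rfl
      rw [hpre, ← Measure.map_apply hπ hTm, hμ (k + 1)]
      have hTeval : {f : ∀ j : Fin (k + 1), HomPoly n (j + 1) | ¬ bombieriNormSq (f i₀) ≤ 1}
          = Function.eval i₀ ⁻¹' (bombieriUnitBall n (k + 1))ᶜ := rfl
      rw [hTeval]
      exact Measure.pi_eval_preimage_null _ (muk_compl_eq_zero n (k + 1))
    have hBrickc : μ Brickᶜ = 0 := by
      have : Brickᶜ = ⋃ k : ℕ, {h : ∀ k : ℕ, HomPoly n (k + 1) | ¬ bombieriNormSq (h k) ≤ 1} := by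
        ext h
        simp [hBrick_def, not_forall]
      rw [this]
      exact measure_iUnion_null hS
    have haemem : ∀ᵐ h ∂μ, h ∈ Brick := by
      rw [ae_iff]
      exact hBrickc
    have hmeas : AEMeasurable ι μ := by
      have h1 : AEMeasurable ι (μ.restrict Brick) := hcontOn.aemeasurable hBrick_meas
      rwa [Measure.restrict_eq_self_of_ae_mem haemem] at h1
    refine ⟨ι, hι_eqF, hcontOn, hBrick_compact.image_of_continuousOn hcontOn,
      Measure.isProbabilityMeasure_map hmeas, ⟨ι '' Brick,
        hBrick_compact.image_of_continuousOn hcontOn, ?_⟩⟩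
    rw [Measure.map_apply_of_aemeasurable hmeas
      (hBrick_compact.image_of_continuousOn hcontOn).isClosed.measurableSet.compl]
    refine measure_mono_null ?_ hBrickc
    intro h hh
    simp only [mem_preimage, mem_compl_iff] at hh ⊢
    exact fun hb => hh (mem_image_of_mem ι hb)
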